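/- If w : [0,T] → ℝ^d is (γ,ρ)-irregular with constant C, then for any λ ∈ (0,1) the rescaled path w^λ(t) := λ^{-(1-γ)/ρ} w(λt), defined on [0, T/λ] restricted to [0,T] (or on [0,T] assuming λT ≤ T), is (γ,ρ)-irregular with the same constant C. -/

import Mathlib

open MeasureTheory Real

noncomputable section

/-- `Φ^w_{s,t}(ξ) = ∫_s^t exp(i ξ · w_r) dr`. -/
def phiW {d : ℕ} (w : ℝ → EuclideanSpace ℝ (Fin d)) (ξ : EuclideanSpace ℝ (Fin d))
    (s t : ℝ) : ℂ :=
  ∫ r in s..t, Complex.exp (Complex.I * ((inner ℝ ξ (w r) : ℝ) : ℂ))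

/-- `w` is `(γ,ρ)`-irregular on `[0,T]` with constant `C`. -/
def IsIrregularWith {d : ℕ} (T γ ρ C : ℝ) (w : ℝ → EuclideanSpace ℝ (Fin d)) : Prop :=
  ∀ ξ : EuclideanSpace ℝ (Fin d), ξ ≠ 0 → ∀ s t : ℝ, 0 ≤ s → s ≤ t → t ≤ T →
    ‖phiW w ξ s t‖ ≤ C * ‖ξ‖ ^ (-ρ) * (t - s) ^ γ

/-- Scaling invariance: if `w` is `(γ,ρ)`-irregular on `[0,T]` with constant `C` and
`λ ∈ (0,1)`, then the rescaled path `w^λ(t) = λ^{-(1-γ)/ρ} w(λ t)` is `(γ,ρ)`-irregular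
on `[0,T]` with the same constant (note `λ t ∈ [0,T]` for `t ∈ [0,T]`). -/
theorem rescale_isIrregularWith {d : ℕ} {T γ ρ C : ℝ} (hT : 0 ≤ T) (hρ : 0 < ρ)
    (w : ℝ → EuclideanSpace ℝ (Fin d)) (hw : IsIrregularWith T γ ρ C w)
    (l : ℝ) (hl : l ∈ Set.Ioo (0 : ℝ) 1) :
    IsIrregularWith T γ ρ C (fun t => (l ^ (-((1 - γ) / ρ)) : ℝ) • w (l * t)) := by
  obtain ⟨hl0, hl1⟩ := hl
  set α : ℝ := l ^ (-((1 - γ) / ρ)) with hα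
  have hαpos : 0 < α := Real.rpow_pos_of_pos hl0 _
  intro ξ hξ s t hs hst htT
  have key : phiW (fun t => α • w (l * t)) ξ s t
      = l⁻¹ • phiW w (α • ξ) (l * s) (l * t) := by
    unfold phiW
    rw [← intervalIntegral.integral_comp_mul_left
      (fun r => Complex.exp (Complex.I * ((inner ℝ (α • ξ) (w r) : ℝ) : ℂ))) (ne_of_gt hl0)]
    congr 1
    ext r
    congr 2
    rw [real_inner_smul_left, real_inner_smul_right]
  rw [key]
  have hbound := hw (α • ξ) (smul_ne_zero (ne_of_gt hαpos) hξ) (l * s) (l * t)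
    (by positivity) (by nlinarith) (by nlinarith)
  have hnorm : ‖l⁻¹ • phiW w (α • ξ) (l * s) (l * t)‖
      = l⁻¹ * ‖phiW w (α • ξ) (l * s) (l * t)‖ := by
    rw [norm_smul, Real.norm_eq_abs, abs_of_pos (by positivity)]
  rw [hnorm]
  have hts : 0 ≤ t - s := by linarith
  have hξpos : 0 < ‖ξ‖ := norm_pos_iff.mpr hξ
  have hnξ : ‖α • ξ‖ ^ (-ρ) = l ^ (1 - γ) * ‖ξ‖ ^ (-ρ) := by
    rw [norm_smul, Real.norm_eq_abs, abs_of_pos hαpos,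
      Real.mul_rpow (le_of_lt hαpos) (le_of_lt hξpos), hα,
      ← Real.rpow_mul (le_of_lt hl0),
      show -((1 - γ) / ρ) * (-ρ) = 1 - γ from by
        rw [neg_mul_neg, div_mul_cancel₀ _ (ne_of_gt hρ)]]
  have hdiff : (l * t - l * s) ^ γ = l ^ γ * (t - s) ^ γ := by
    rw [← mul_sub, Real.mul_rpow (le_of_lt hl0) hts]
  calc l⁻¹ * ‖phiW w (α • ξ) (l * s) (l * t)‖
      ≤ l⁻¹ * (C * ‖α • ξ‖ ^ (-ρ) * (l * t - l * s) ^ γ) := by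
        apply mul_le_mul_of_nonneg_left hbound (by positivity)
    _ = C * ‖ξ‖ ^ (-ρ) * (t - s) ^ γ := by
        rw [hnξ, hdiff]
        have h2 : l ^ (1 - γ) * l ^ γ = l := by
          rw [← Real.rpow_add hl0]; norm_num
        rw [show l⁻¹ * (C * (l ^ (1 - γ) * ‖ξ‖ ^ (-ρ)) * (l ^ γ * (t - s) ^ γ))
            = l⁻¹ * (l ^ (1 - γ) * l ^ γ) * (C * ‖ξ‖ ^ (-ρ) * (t - s) ^ γ) from by ring,
          h2, inv_mul_cancel₀ (ne_of_gt hl0), one_mul]
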